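/- Let k ≥ 1 be an integer. For every integer j with 1 ≤ j ≤ 3^k − 1, the binomial coefficient C(3^k, j) is divisible by 3, and C(3^k, j)/3 ≡ 1 (mod 3) if j ∈ {3^{k−1}, 2·3^{k−1}}, while C(3^k, j)/3 ≡ 0 (mod 3) otherwise. -/

import Mathlib

private lemma fact3 : Fact (Nat.Prime 3) := ⟨by norm_num⟩

private lemma choose_pred_pow_three_mod (k : ℕ) :
    ∀ m, m ≤ 3 ^ k - 1 →
      Nat.choose (3 ^ k - 1) m % 3 = if m % 2 = 0 then 1 else 2 := by
  haveI := fact3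
  induction k with
  | zero =>
    intro m hm
    interval_cases m
    simp
  | succ k ih =>
    intro m hm
    have h1 : 1 ≤ 3 ^ k := Nat.one_le_pow _ _ (by norm_num)
    have h3 : 3 ^ (k + 1) - 1 = 3 * (3 ^ k - 1) + 2 := by
      rw [pow_succ]; omega
    have key : Nat.choose (3 ^ (k + 1) - 1) m ≡
        Nat.choose ((3 ^ (k + 1) - 1) % 3) (m % 3) *
          Nat.choose ((3 ^ (k + 1) - 1) / 3) (m / 3) [MOD 3] :=
      Choose.choose_modEq_choose_mod_mul_choose_div_nat (p := 3)
    have hmod : (3 ^ (k + 1) - 1) % 3 = 2 := by omega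
    have hdiv : (3 ^ (k + 1) - 1) / 3 = 3 ^ k - 1 := by omega
    rw [hmod, hdiv] at key
    have hq : m / 3 ≤ 3 ^ k - 1 := by omega
    have hih := ih (m / 3) hq
    have key' : Nat.choose (3 ^ (k + 1) - 1) m % 3 =
        (Nat.choose 2 (m % 3) * Nat.choose (3 ^ k - 1) (m / 3)) % 3 := key
    have hr : m % 3 = 0 ∨ m % 3 = 1 ∨ m % 3 = 2 := by omega
    have hq2 : m / 3 % 2 = 0 ∨ m / 3 % 2 = 1 := by omega
    rw [Nat.mul_mod, hih] at key'
    rcases hr with hr | hr | hr <;> rcases hq2 with hq2 | hq2 <;>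
      rw [hr, hq2] at key' <;> norm_num [Nat.choose] at key' <;>
      rw [key'] <;> split <;> omega

theorem choose_three_pow_div_three_mod_three
    (k : ℕ) (hk : 1 ≤ k) (j : ℕ) (hj1 : 1 ≤ j) (hj2 : j ≤ 3 ^ k - 1) :
    3 ∣ Nat.choose (3 ^ k) j ∧
      (Nat.choose (3 ^ k) j / 3) % 3 =
        if j = 3 ^ (k - 1) ∨ j = 2 * 3 ^ (k - 1) then 1 else 0 := by
  have h1 : 1 ≤ 3 ^ k := Nat.one_le_pow _ _ (by norm_num)
  have hk3 : 3 ^ k = 3 * 3 ^ (k - 1) := by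
    conv_lhs => rw [show k = (k - 1) + 1 by omega]
    rw [pow_succ]; ring
  have h1' : 1 ≤ 3 ^ (k - 1) := Nat.one_le_pow _ _ (by norm_num)
  -- key identity: 3^k * D = C * j
  set C := Nat.choose (3 ^ k) j with hC
  set D := Nat.choose (3 ^ k - 1) (j - 1) with hD
  have hid : 3 ^ k * D = C * j := by
    have := Nat.add_one_mul_choose_eq (3 ^ k - 1) (j - 1)
    rw [show 3 ^ k - 1 + 1 = 3 ^ k by omega, show j - 1 + 1 = j by omega] at this
    exact this
  have hDmod := choose_pred_pow_three_mod k (j - 1) (by omega)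
  by_cases hcase : j = 3 ^ (k - 1) ∨ j = 2 * 3 ^ (k - 1)
  · rw [if_pos hcase]
    have hodd : 3 ^ (k - 1) % 2 = 1 := Nat.pow_mod 3 (k-1) 2 ▸ (by simp [Nat.one_pow])
    rcases hcase with hj | hj
    · -- j = 3^(k-1), so 3*j*D = C*j, C = 3*D
      have hCD : C = 3 * D := by
        have h2 : 3 * j * D = C * j := by rw [← hj] at hk3; rw [← hk3]; exact hid
        have := Nat.eq_of_mul_eq_mul_right (show 0 < j by omega)
          (show (3 * D) * j = C * j by linarith [h2])
        omega
      have hD1 : D % 3 = 1 := by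
        rw [hDmod]; rw [if_pos (by omega)]
      constructor
      · exact ⟨D, hCD⟩
      · rw [hCD, Nat.mul_div_cancel_left _ (by norm_num)]; exact hD1
    · -- j = 2*3^(k-1): 3D = 2C
      have h2 : 3 * D = 2 * C := by
        have h3 : 3 ^ k * D = C * (2 * 3 ^ (k - 1)) := hj ▸ hid
        rw [hk3] at h3
        have := Nat.eq_of_mul_eq_mul_right h1'
          (show (3 * D) * 3 ^ (k-1) = (2 * C) * 3 ^ (k-1) by linarith [h3])
        omega
      have hD2 : D % 3 = 2 := by
        rw [hDmod]; rw [if_neg (by omega)]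
      -- D even: 2 ∣ 3D hence 2 ∣ D
      have hDe : D % 2 = 0 := by omega
      obtain ⟨E, hE⟩ : 2 ∣ D := by omega
      have hCE : C = 3 * E := by omega
      constructor
      · exact ⟨E, hCE⟩
      · rw [hCE, Nat.mul_div_cancel_left _ (by norm_num)]; omega
  · rw [if_neg hcase]
    push_neg at hcase
    -- v := 3-adic valuation of j; v ≤ k - 2
    set v := j.factorization 3 with hv
    have hdvd : 3 ^ v ∣ j := Nat.ordProj_dvd j 3
    have hnd : ¬ 3 ^ (v + 1) ∣ j :=
      Nat.pow_succ_factorization_not_dvd (by omega) (by norm_num)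
    obtain ⟨u, hu⟩ := hdvd
    have hu3 : ¬ 3 ∣ u := by
      intro ⟨w, hw⟩
      exact hnd ⟨w, by rw [hu, hw]; ring⟩
    have hvk : v + 2 ≤ k := by
      by_contra hlt
      -- then v ≥ k - 1, so 3^(k-1) ∣ j
      have hv1 : k - 1 ≤ v := by omega
      have : 3 ^ (k - 1) ∣ j := dvd_trans (pow_dvd_pow 3 hv1) ⟨u, hu⟩
      obtain ⟨t, ht⟩ := this
      have ht3 : t < 3 := by
        by_contra h
        push_neg at h
        have : 3 ^ (k - 1) * 3 ≤ 3 ^ (k - 1) * t := Nat.mul_le_mul_left _ h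
        omega
      have ht1 : 1 ≤ t := by
        rcases Nat.eq_zero_or_pos t with h | h
        · rw [h, Nat.mul_zero] at ht; omega
        · exact h
      interval_cases t
      · exact hcase.1 (by omega)
      · exact hcase.2 (by omega)
    -- cancel 3^v : 3^(k-v) * D = C * u
    have hcancel : 3 ^ (k - v) * D = C * u := by
      have : 3 ^ v * (3 ^ (k - v) * D) = 3 ^ v * (C * u) := by
        rw [← mul_assoc, ← pow_add, show v + (k - v) = k by omega]
        rw [hid, hu]; ring
      exact Nat.eq_of_mul_eq_mul_left (Nat.pow_pos (n := v) (by norm_num)) this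
    have hcop : Nat.Coprime (3 ^ (k - v)) u :=
      Nat.Coprime.pow_left _ ((Nat.Prime.coprime_iff_not_dvd (by norm_num)).mpr hu3)
    have h9 : 3 ^ (k - v) ∣ C :=
      Nat.Coprime.dvd_of_dvd_mul_right hcop ⟨D, hcancel.symm⟩
    have h9' : (9 : ℕ) ∣ C := by
      refine dvd_trans ?_ h9
      rw [show (9:ℕ) = 3 ^ 2 by norm_num]
      exact pow_dvd_pow 3 (by omega)
    obtain ⟨t, ht⟩ := h9'
    constructor
    · exact ⟨3 * t, by omega⟩
    · rw [ht, show 9 * t = 3 * (3 * t) by ring, Nat.mul_div_cancel_left _ (by norm_num)]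
      omega
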